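/- Let G be a monoid acting on a set X and let φ be a special filter on X with ⋂φ = {x_0}, and let τ_φ consist of all sets U⊆X such that for every g∈G with g•x_0∈U the preimage {x∈X : g•x∈U} belongs to φ. Then for every set F∈φ the orbit set G(F) = {g•x : g∈G, x∈F} is both open and closed in (X, τ_φ), and the complement X∖G(F) is a discrete subspace of (X, τ_φ). -/

import Mathlib

open Topology Cardinal

universe u

/-- An injective transfinite sequence `(x_α)_{α<κ}` of points of a `G`-act `X` is *special*
(with least index `i₀`) if there is an enumeration `G = {g_α}_{α<κ}` of the monoid `G` such
that for all `α < κ` and all `β, γ, δ < α`: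
(1) if `g_β • x_{i₀} ≠ g_γ • x_{i₀}` then `g_β • x_α ≠ g_γ • x_α`, and
(2) if `g_β • x_{i₀} ≠ g_γ • x_δ` then `g_β • x_α ≠ g_γ • x_δ`. -/
def IsSpecialSeq (G : Type u) {X : Type u} [Monoid G] [MulAction G X] (κ : Cardinal.{u})
    (x : κ.ord.ToType → X) (i₀ : κ.ord.ToType) : Prop :=
  (∀ i, i₀ ≤ i) ∧ Function.Injective x ∧
  ∃ g : κ.ord.ToType → G, Function.Surjective g ∧
    ∀ α β γ δ : κ.ord.ToType, β < α → γ < α → δ < α →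
      (g β • x i₀ ≠ g γ • x i₀ → g β • x α ≠ g γ • x α) ∧
      (g β • x i₀ ≠ g γ • x δ → g β • x α ≠ g γ • x δ)

/-- A filter `φ` on a `G`-act `X` is *special* (with `⋂ φ = {x₀}`) if for some cardinal `κ`
there is a special sequence `(x_α)_{α<κ}` in `X` with first term `x₀` such that
`⋂ φ = {x₀}` and `{x₀} ∪ {x_β : α < β < κ} ∈ φ` for all `α < κ`. -/
def IsSpecialFilter (G : Type u) {X : Type u} [Monoid G] [MulAction G X]
    (φ : Filter X) (x₀ : X) : Prop :=
  ∃ (κ : Cardinal.{u}) (x : κ.ord.ToType → X) (i₀ : κ.ord.ToType),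
    IsSpecialSeq G κ x i₀ ∧ x i₀ = x₀ ∧ ⋂₀ φ.sets = {x₀} ∧
    ∀ α : κ.ord.ToType, insert x₀ (x '' Set.Ioi α) ∈ φ

/-- The topology `τ_φ`. -/
def tauPhi (G X : Type*) [Monoid G] [MulAction G X] (x₀ : X) (φ : Filter X) :
    TopologicalSpace X where
  IsOpen U := ∀ g : G, g • x₀ ∈ U → {x : X | g • x ∈ U} ∈ φ
  isOpen_univ := fun _ _ => Filter.univ_mem' fun _ => trivial
  isOpen_inter := fun U V hU hV g hg =>
    Filter.inter_mem (hU g hg.1) (hV g hg.2)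
  isOpen_sUnion := fun S hS g hg => by
    obtain ⟨t, htS, hgt⟩ := hg
    exact Filter.mem_of_superset (hS t htS g hgt) fun x hx => ⟨t, htS, hx⟩

/-- If `φ` is a special filter on a `G`-act `X` with `⋂ φ = {x₀}`, then for every set
`F ∈ φ` the orbit set `G(F) = {g • x : g ∈ G, x ∈ F}` is both open and closed in
`(X, τ_φ)`, and the complement `X ∖ G(F)` is a discrete subspace of `(X, τ_φ)`. -/
theorem tauPhi_orbit_clopen_of_specialFilter {G X : Type u} [Monoid G] [MulAction G X]
    (φ : Filter X) (x₀ : X) (hφ : IsSpecialFilter G φ x₀) :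
    ∀ F ∈ φ,
      IsOpen[tauPhi G X x₀ φ] {y : X | ∃ g : G, ∃ x ∈ F, y = g • x} ∧
      IsClosed[tauPhi G X x₀ φ] {y : X | ∃ g : G, ∃ x ∈ F, y = g • x} ∧
      @DiscreteTopology ({y : X | ∃ g : G, ∃ x ∈ F, y = g • x}ᶜ : Set X)
        (TopologicalSpace.induced Subtype.val (tauPhi G X x₀ φ)) := by
  obtain ⟨κ, xs, i₀, _, hx0, hInter, _⟩ := hφ
  intro F hF
  have hx0F : x₀ ∈ F := by
    have : x₀ ∈ ⋂₀ φ.sets := by rw [hInter]; rfl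
    exact this F hF
  set O := {y : X | ∃ g : G, ∃ x ∈ F, y = g • x} with hO
  have hsub : ∀ g : G, F ⊆ {x : X | g • x ∈ O} := fun g x hx => ⟨g, x, hx, rfl⟩
  have hOopen : IsOpen[tauPhi G X x₀ φ] O := fun g _ =>
    φ.mem_of_superset hF (hsub g)
  have hx0O : ∀ g : G, g • x₀ ∈ O := fun g => ⟨g, x₀, hx0F, rfl⟩
  have hOclosed : IsClosed[tauPhi G X x₀ φ] O :=
    @IsClosed.mk X (tauPhi G X x₀ φ) O (fun g hg => absurd (hx0O g) hg)
  refine ⟨hOopen, hOclosed, ?_⟩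
  letI t := tauPhi G X x₀ φ
  have : ∀ a : (Oᶜ : Set X), IsOpen[TopologicalSpace.induced Subtype.val t] {a} := by
    rintro ⟨y, hy⟩
    have hUopen : IsOpen[t] (insert y O) := fun g _ =>
      φ.mem_of_superset hF (fun x hx => Set.mem_insert_of_mem y (hsub g hx))
    have heq : {(⟨y, hy⟩ : (Oᶜ : Set X))} = Subtype.val ⁻¹' (insert y O) := by
      ext ⟨z, hz⟩
      simp only [Set.mem_singleton_iff, Set.mem_preimage, Set.mem_insert_iff,
        Subtype.ext_iff]
      exact ⟨fun h => Or.inl h, fun h => h.resolve_right (fun h' => hz h')⟩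
    rw [heq]
    exact ⟨insert y O, hUopen, rfl⟩
  exact (@discreteTopology_iff_isOpen_singleton _ (TopologicalSpace.induced Subtype.val t)).mpr this
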